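/- Let n ≥ 6. Let Γ′_1,…,Γ′_{n−2} be 3-element subsets of {1,…,n} satisfying condition (†) (with parameter n), such that: n ∈ Γ′_{n−3}; Γ′_{n−2} = {i, n−1, n} for some i; and n ∉ Γ′_j for all j ≤ n−4. Let a ∈ {1,…,n} with a ∉ Γ′_{n−3} and a ∉ {i, n−1}. Define 3-element subsets of {1,…,n+1} by: Γ_j = Γ′_j for j ≤ n−3, Γ_{n−2} = {i, n−1, n+1}, and Γ_{n−1} = {a, n, n+1}. Then Γ_1,…,Γ_{n−1} satisfy condition (†) with parameter n+1, i.e. |⋃_{j∈S} Γ_j| ≥ |S| + 3 for every S ⊆ {1,…,n−1} with 2 ≤ |S| ≤ n−2. -/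

import Mathlib

open Finset

/-- The inductive (Fibonacci-like) Construction 3.8 of Castravet–Tevelev: starting from
a 3-uniform hypergraph `Γ'_1,…,Γ'_{n-2}` on `{1,…,n}` satisfying condition (†), with
`n ∈ Γ'_{n-3}`, `Γ'_{n-2} = {i, n-1, n}`, and `n` in no other hyperedge, and choosing
`a ∈ {1,…,n}` with `a ∉ Γ'_{n-3}` and `a ∉ {i, n-1}`, the hypergraph
`Γ_1,…,Γ_{n-1}` on `{1,…,n+1}` given by `Γ_j = Γ'_j` for `j ≤ n-3`,
`Γ_{n-2} = {i, n-1, n+1}`, `Γ_{n-1} = {a, n, n+1}` satisfies condition (†) with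
parameter `n+1`. -/
theorem construction_satisfies_dagger (n : ℕ) (hn : 6 ≤ n)
    (Γ' : ℕ → Finset ℕ) (i a : ℕ)
    (hsub : ∀ j ∈ Finset.Icc 1 (n - 2), Γ' j ⊆ Finset.Icc 1 n)
    (hcard : ∀ j ∈ Finset.Icc 1 (n - 2), (Γ' j).card = 3)
    (hdag : ∀ S ⊆ Finset.Icc 1 (n - 2), 2 ≤ S.card → S.card ≤ n - 3 →
      S.card + 3 ≤ (S.biUnion Γ').card)
    (hlast1 : n ∈ Γ' (n - 3))
    (hlast2 : Γ' (n - 2) = {i, n - 1, n})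
    (hnotn : ∀ j ∈ Finset.Icc 1 (n - 4), n ∉ Γ' j)
    (haN : a ∈ Finset.Icc 1 n)
    (ha1 : a ∉ Γ' (n - 3)) (ha2 : a ≠ i) (ha3 : a ≠ n - 1)
    (Γ : ℕ → Finset ℕ)
    (hΓ : ∀ j ∈ Finset.Icc 1 (n - 3), Γ j = Γ' j)
    (hΓ2 : Γ (n - 2) = {i, n - 1, n + 1})
    (hΓ3 : Γ (n - 1) = {a, n, n + 1}) :
    ∀ S ⊆ Finset.Icc 1 (n - 1), 2 ≤ S.card → S.card ≤ (n + 1) - 3 →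
      S.card + 3 ≤ (S.biUnion Γ).card := by
  intro S hS hc2 hc3
  have hmem2 : n - 2 ∈ Finset.Icc 1 (n - 2) := by simp [Finset.mem_Icc]; omega
  have hi : i ∈ Finset.Icc 1 n := hsub (n - 2) hmem2 (by rw [hlast2]; simp)
  obtain ⟨hi1, hi2⟩ := Finset.mem_Icc.mp hi
  obtain ⟨ha4, ha5⟩ := Finset.mem_Icc.mp haN
  have han : a ≠ n := fun h => ha1 (h ▸ hlast1)
  set T := (S.erase (n - 1)).erase (n - 2) with hTdef
  have hTS : T ⊆ S := (Finset.erase_subset _ _).trans (Finset.erase_subset _ _)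
  have hTsub : T ⊆ Finset.Icc 1 (n - 3) := by
    intro j hj
    have h1 : j ≠ n - 2 := Finset.ne_of_mem_erase hj
    have h2' : j ≠ n - 1 := Finset.ne_of_mem_erase (Finset.mem_of_mem_erase hj)
    have h3' := Finset.mem_Icc.mp (hS (hTS hj))
    simp only [Finset.mem_Icc]; omega
  have hTsub2 : T ⊆ Finset.Icc 1 (n - 2) :=
    hTsub.trans (Finset.Icc_subset_Icc le_rfl (by omega))
  have hBi : T.biUnion Γ = T.biUnion Γ' :=
    Finset.biUnion_congr rfl (fun j hj => hΓ j (hTsub hj))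
  have hBsub : T.biUnion Γ' ⊆ Finset.Icc 1 n :=
    Finset.biUnion_subset.mpr (fun j hj => hsub j (hTsub2 hj))
  have hnp1 : n + 1 ∉ T.biUnion Γ' := fun h => by
    have := Finset.mem_Icc.mp (hBsub h); omega
  have hBS : T.biUnion Γ ⊆ S.biUnion Γ :=
    Finset.biUnion_subset_biUnion_of_subset_left Γ hTS
  have hTcard3 : T.card ≤ n - 3 := by
    have := Finset.card_le_card hTsub
    rwa [Nat.card_Icc, show n - 3 + 1 - 1 = n - 3 by omega] at this
  by_cases hm1 : n - 1 ∈ S <;> by_cases hm2 : n - 2 ∈ S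
  · -- Case 4: both n-1 and n-2 in S
    have hcardT : T.card = S.card - 2 := by
      rw [hTdef, Finset.card_erase_of_mem
        (Finset.mem_erase.mpr ⟨by omega, hm2⟩), Finset.card_erase_of_mem hm1]
      omega
    by_cases hT0 : T.card = 0
    · have hScard : S.card = 2 := by omega
      have hc2' := hcard (n - 2) hmem2
      rw [hlast2] at hc2'
      have hi3 : i ≠ n - 1 := by
        intro h
        rw [h, show ({n - 1, n - 1, n} : Finset ℕ) = {n - 1, n} by
          simp [Finset.insert_idem]] at hc2'
        have := Finset.card_insert_le (n - 1) ({n} : Finset ℕ)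
        simp at this; omega
      have hi4 : i ≠ n := by
        intro h
        rw [h, show ({n, n - 1, n} : Finset ℕ) = {n, n - 1} by
          ext x; simp; tauto] at hc2'
        have := Finset.card_insert_le n ({n - 1} : Finset ℕ)
        simp at this; omega
      have hsub5 : ({a, i, n - 1, n, n + 1} : Finset ℕ) ⊆ S.biUnion Γ := by
        intro x hx
        rw [Finset.mem_biUnion]
        simp only [Finset.mem_insert, Finset.mem_singleton] at hx
        rcases hx with hx | hx | hx | hx | hx
        · exact ⟨n - 1, hm1, by rw [hΓ3, hx]; simp⟩
        · exact ⟨n - 2, hm2, by rw [hΓ2, hx]; simp⟩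
        · exact ⟨n - 2, hm2, by rw [hΓ2, hx]; simp⟩
        · exact ⟨n - 1, hm1, by rw [hΓ3, hx]; simp⟩
        · exact ⟨n - 1, hm1, by rw [hΓ3, hx]; simp⟩
      have h5 : ({a, i, n - 1, n, n + 1} : Finset ℕ).card = 5 := by
        rw [Finset.card_insert_of_notMem
            (by simp only [Finset.mem_insert, Finset.mem_singleton]; omega),
          Finset.card_insert_of_notMem
            (by simp only [Finset.mem_insert, Finset.mem_singleton]; omega),
          Finset.card_insert_of_notMem
            (by simp only [Finset.mem_insert, Finset.mem_singleton]; omega),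
          Finset.card_insert_of_notMem (by simp only [Finset.mem_singleton]; omega),
          Finset.card_singleton]
      have := Finset.card_le_card hsub5
      omega
    · -- T nonempty: use T' = insert (n-2) T
      have hnT : n - 2 ∉ T := Finset.notMem_erase _ _
      have hT'sub : insert (n - 2) T ⊆ Finset.Icc 1 (n - 2) :=
        Finset.insert_subset hmem2 hTsub2
      have hcT' : (insert (n - 2) T).card = T.card + 1 :=
        Finset.card_insert_of_notMem hnT
      have hd := hdag (insert (n - 2) T) hT'sub (by omega) (by omega)
      have hT'B : (insert (n - 2) T).biUnion Γ' ⊆ S.biUnion Γ := by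
        rw [Finset.biUnion_insert, hlast2]
        apply Finset.union_subset
        · intro x hx
          simp only [Finset.mem_insert, Finset.mem_singleton] at hx
          rw [Finset.mem_biUnion]
          rcases hx with hx | hx | hx
          · exact ⟨n - 2, hm2, by rw [hΓ2, hx]; simp⟩
          · exact ⟨n - 2, hm2, by rw [hΓ2, hx]; simp⟩
          · exact ⟨n - 1, hm1, by rw [hΓ3, hx]; simp⟩
        · rw [← hBi]; exact hBS
      have hnp1' : n + 1 ∉ (insert (n - 2) T).biUnion Γ' := fun h => by
        have := Finset.mem_Icc.mp
          (Finset.biUnion_subset.mpr (fun j hj => hsub j (hT'sub hj)) h)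
        omega
      have hmemn1 : n + 1 ∈ S.biUnion Γ :=
        Finset.mem_biUnion.mpr ⟨n - 1, hm1, by rw [hΓ3]; simp⟩
      have hsub' : insert (n + 1) ((insert (n - 2) T).biUnion Γ') ⊆ S.biUnion Γ :=
        Finset.insert_subset hmemn1 hT'B
      have := Finset.card_le_card hsub'
      rw [Finset.card_insert_of_notMem hnp1'] at this
      omega
  · -- Case 2: n-1 ∈ S, n-2 ∉ S
    have hT' : T = S.erase (n - 1) := by
      rw [hTdef, Finset.erase_eq_of_notMem
        (fun h => hm2 (Finset.mem_of_mem_erase h))]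
    have hcardT : T.card = S.card - 1 := by
      rw [hT', Finset.card_erase_of_mem hm1]
    have hmemn1 : n + 1 ∈ S.biUnion Γ :=
      Finset.mem_biUnion.mpr ⟨n - 1, hm1, by rw [hΓ3]; simp⟩
    by_cases hT2 : 2 ≤ T.card
    · have hd := hdag T hTsub2 hT2 hTcard3
      have hsub' : insert (n + 1) (T.biUnion Γ') ⊆ S.biUnion Γ :=
        Finset.insert_subset hmemn1 (hBi ▸ hBS)
      have := Finset.card_le_card hsub'
      rw [Finset.card_insert_of_notMem hnp1] at this
      omega
    · -- T.card = 1
      have hT1 : T.card = 1 := by omega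
      obtain ⟨j, hj⟩ := Finset.card_eq_one.mp hT1
      have hjT : j ∈ T := by rw [hj]; simp
      obtain ⟨hj1, hj2⟩ := Finset.mem_Icc.mp (hTsub hjT)
      have hjS := hTS hjT
      have hΓj : Γ j = Γ' j := hΓ j (hTsub hjT)
      have hΓ'j := hsub j (hTsub2 hjT)
      have hcj := hcard j (hTsub2 hjT)
      have hScard : S.card = 2 := by omega
      have hΓjS : Γ' j ⊆ S.biUnion Γ := fun x hx =>
        Finset.mem_biUnion.mpr ⟨j, hjS, by rw [hΓj]; exact hx⟩
      by_cases hj3 : j = n - 3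
      · have hmema : a ∈ S.biUnion Γ :=
          Finset.mem_biUnion.mpr ⟨n - 1, hm1, by rw [hΓ3]; simp⟩
        have c1 : a ∉ Γ' j := hj3 ▸ ha1
        have c2 : n + 1 ∉ insert a (Γ' j) := by
          simp only [Finset.mem_insert]
          push_neg
          exact ⟨by omega, fun h => by
            have := Finset.mem_Icc.mp (hΓ'j h); omega⟩
        have hsub5 : insert (n + 1) (insert a (Γ' j)) ⊆ S.biUnion Γ :=
          Finset.insert_subset hmemn1 (Finset.insert_subset hmema hΓjS)
        have := Finset.card_le_card hsub5
        rw [Finset.card_insert_of_notMem c2, Finset.card_insert_of_notMem c1,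
          hcj] at this
        omega
      · have c1 : n ∉ Γ' j := hnotn j (by simp [Finset.mem_Icc]; omega)
        have hmemn : n ∈ S.biUnion Γ :=
          Finset.mem_biUnion.mpr ⟨n - 1, hm1, by rw [hΓ3]; simp⟩
        have c2 : n + 1 ∉ insert n (Γ' j) := by
          simp only [Finset.mem_insert]
          push_neg
          exact ⟨by omega, fun h => by
            have := Finset.mem_Icc.mp (hΓ'j h); omega⟩
        have hsub5 : insert (n + 1) (insert n (Γ' j)) ⊆ S.biUnion Γ :=
          Finset.insert_subset hmemn1 (Finset.insert_subset hmemn hΓjS)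
        have := Finset.card_le_card hsub5
        rw [Finset.card_insert_of_notMem c2, Finset.card_insert_of_notMem c1,
          hcj] at this
        omega
  · -- Case 3: n-2 ∈ S, n-1 ∉ S
    have hT' : T = S.erase (n - 2) := by
      rw [hTdef, Finset.erase_eq_of_notMem hm1]
    have hins : S = insert (n - 2) T := by
      rw [hT', Finset.insert_erase hm2]
    have hcardT : T.card = S.card - 1 := by
      rw [hT', Finset.card_erase_of_mem hm2]
    by_cases hsmall : S.card ≤ n - 3
    · -- swap argument: compare with Γ'
      have hSsub2 : S ⊆ Finset.Icc 1 (n - 2) := by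
        rw [hins]; exact Finset.insert_subset hmem2 hTsub2
      have hd := hdag S hSsub2 hc2 hsmall
      have hmemn1 : n + 1 ∈ S.biUnion Γ :=
        Finset.mem_biUnion.mpr ⟨n - 2, hm2, by rw [hΓ2]; simp⟩
      have hkey : S.biUnion Γ' ⊆ insert n ((S.biUnion Γ).erase (n + 1)) := by
        intro x hx
        obtain ⟨j, hjS', hxj⟩ := Finset.mem_biUnion.mp hx
        by_cases hj : j = n - 2
        · rw [hj, hlast2] at hxj
          simp only [Finset.mem_insert, Finset.mem_singleton] at hxj
          rcases hxj with hx' | hx' | hx'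
          · refine Finset.mem_insert_of_mem (Finset.mem_erase.mpr ⟨by omega, ?_⟩)
            exact Finset.mem_biUnion.mpr ⟨n - 2, hm2, by rw [hΓ2, hx']; simp⟩
          · refine Finset.mem_insert_of_mem (Finset.mem_erase.mpr ⟨by omega, ?_⟩)
            exact Finset.mem_biUnion.mpr ⟨n - 2, hm2, by rw [hΓ2, hx']; simp⟩
          · rw [hx']; exact Finset.mem_insert_self _ _
        · have hjT : j ∈ T := by
            rw [hT']; exact Finset.mem_erase.mpr ⟨hj, hjS'⟩
          have hxT : x ∈ T.biUnion Γ' := Finset.mem_biUnion.mpr ⟨j, hjT, hxj⟩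
          refine Finset.mem_insert_of_mem (Finset.mem_erase.mpr ⟨?_, ?_⟩)
          · have := Finset.mem_Icc.mp (hBsub hxT); omega
          · exact hBS (hBi ▸ hxT)
      have hce : ((S.biUnion Γ).erase (n + 1)).card = (S.biUnion Γ).card - 1 :=
        Finset.card_erase_of_mem hmemn1
      have h1 := Finset.card_insert_le n ((S.biUnion Γ).erase (n + 1))
      have h2' := Finset.card_le_card hkey
      have h3' : 1 ≤ (S.biUnion Γ).card := Finset.card_pos.mpr ⟨n + 1, hmemn1⟩
      omega
    · -- S.card = n - 2
      have hScard : S.card = n - 2 := by omega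
      have hd := hdag T hTsub2 (by omega) (by omega)
      have hmemn1 : n + 1 ∈ S.biUnion Γ :=
        Finset.mem_biUnion.mpr ⟨n - 2, hm2, by rw [hΓ2]; simp⟩
      have hsub' : insert (n + 1) (T.biUnion Γ') ⊆ S.biUnion Γ :=
        Finset.insert_subset hmemn1 (hBi ▸ hBS)
      have := Finset.card_le_card hsub'
      rw [Finset.card_insert_of_notMem hnp1] at this
      omega
  · -- Case 1: neither
    have hST : T = S := by
      rw [hTdef, Finset.erase_eq_of_notMem hm1, Finset.erase_eq_of_notMem hm2]
    calc S.card + 3 = T.card + 3 := by rw [hST]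
      _ ≤ (T.biUnion Γ').card := hdag T hTsub2 (by rw [hST]; exact hc2) hTcard3
      _ = (T.biUnion Γ).card := by rw [hBi]
      _ ≤ (S.biUnion Γ).card := Finset.card_le_card (by rw [hST])
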